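/- The map z_g ↦ β((θ₂(u₀)-θ₂(0))/(θ₁(0)(θ₁(0)+θ₂(0))))(e^{θ₁(0)(d-z_g)} + (θ₁(0)/θ₂(0))e^{-θ₂(0)(d-z_g)}) - 1/r + (β/θ₂(0))e^{-θ₂(0)(d-z_g)} is strictly increasing on [d,∞) and its value at z_g = d equals ξ₂(β) = (βu₀-1)/r + β/θ₂(u₀). -/

import Mathlib

open Real Set

noncomputable def th1 (μ σ r u : ℝ) : ℝ := (Real.sqrt ((μ - u)^2 + 2*r*σ^2) + (μ - u)) / σ^2
noncomputable def th2 (μ σ r u : ℝ) : ℝ := (Real.sqrt ((μ - u)^2 + 2*r*σ^2) - (μ - u)) / σ^2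

noncomputable def xi2 (μ σ r u₀ β : ℝ) : ℝ := (β * u₀ - 1) / r + β / th2 μ σ r u₀

noncomputable def rhsC (μ σ r u₀ β d zg : ℝ) : ℝ :=
  β * ((th2 μ σ r u₀ - th2 μ σ r 0) / (th1 μ σ r 0 * (th1 μ σ r 0 + th2 μ σ r 0))) *
      (Real.exp (th1 μ σ r 0 * (d - zg)) + th1 μ σ r 0 / th2 μ σ r 0 * Real.exp (-(th2 μ σ r 0) * (d - zg))) -
    1 / r + β / th2 μ σ r 0 * Real.exp (-(th2 μ σ r 0) * (d - zg))

lemma sqrt_facts (m c : ℝ) (hc : 0 < c) :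
    Real.sqrt (m^2 + c) ^ 2 = m^2 + c ∧ -m < Real.sqrt (m^2+c) ∧ m < Real.sqrt (m^2+c) := by
  have h0 : 0 ≤ Real.sqrt (m^2+c) := Real.sqrt_nonneg _
  have hsq : Real.sqrt (m^2 + c) ^ 2 = m^2 + c := Real.sq_sqrt (by positivity)
  refine ⟨hsq, ?_, ?_⟩ <;> nlinarith

lemma th1_pos (μ σ r u : ℝ) (hσ : 0 < σ) (hr : 0 < r) : 0 < th1 μ σ r u := by
  obtain ⟨_, h1, _⟩ := sqrt_facts (μ - u) (2*r*σ^2) (by positivity)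
  rw [th1]
  have : 0 < Real.sqrt ((μ-u)^2 + 2*r*σ^2) + (μ - u) := by linarith
  positivity

lemma th2_pos (μ σ r u : ℝ) (hσ : 0 < σ) (hr : 0 < r) : 0 < th2 μ σ r u := by
  obtain ⟨_, _, h2⟩ := sqrt_facts (μ - u) (2*r*σ^2) (by positivity)
  rw [th2]
  have : 0 < Real.sqrt ((μ-u)^2 + 2*r*σ^2) - (μ - u) := by linarith
  positivity

lemma th_prod (μ σ r u : ℝ) (hσ : 0 < σ) (hr : 0 < r) :
    th1 μ σ r u * th2 μ σ r u * σ^2 = 2*r := by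
  obtain ⟨hsq, _, _⟩ := sqrt_facts (μ - u) (2*r*σ^2) (by positivity)
  rw [th1, th2]
  have hσ2 : σ^2 ≠ 0 := by positivity
  field_simp
  linear_combination hsq

lemma th2_quad (μ σ r u : ℝ) (hσ : 0 < σ) (hr : 0 < r) :
    σ^2 * (th2 μ σ r u)^2 / 2 + (μ - u) * th2 μ σ r u = r := by
  obtain ⟨hsq, _, _⟩ := sqrt_facts (μ - u) (2*r*σ^2) (by positivity)
  rw [th2]
  have hσ2 : σ^2 ≠ 0 := by positivity
  field_simp
  rw [show (μ - u) ^ 2 + σ ^ 2 * 2 * r = (μ - u) ^ 2 + 2 * r * σ ^ 2 by ring]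
  linear_combination hsq

lemma th2_mono (μ σ r u₀ : ℝ) (hσ : 0 < σ) (hr : 0 < r) (hu₀ : 0 < u₀) :
    th2 μ σ r 0 < th2 μ σ r u₀ := by
  obtain ⟨hsq, hs1, hs2⟩ := sqrt_facts (μ - 0) (2*r*σ^2) (by positivity)
  obtain ⟨htq, ht1, ht2⟩ := sqrt_facts (μ - u₀) (2*r*σ^2) (by positivity)
  set s := Real.sqrt ((μ-0)^2 + 2*r*σ^2)
  set t := Real.sqrt ((μ-u₀)^2 + 2*r*σ^2)
  have hkey : s < t + u₀ := by
    have h2 : s^2 < (t + u₀)^2 := by nlinarith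
    have ht0 : (0:ℝ) ≤ t + u₀ := by nlinarith [Real.sqrt_nonneg ((μ-u₀)^2 + 2*r*σ^2)]
    nlinarith [Real.sqrt_nonneg ((μ-0)^2 + 2*r*σ^2)]
  rw [th2, th2]
  have hσ2 : (0:ℝ) < σ^2 := by positivity
  rw [div_lt_div_iff₀ hσ2 hσ2]
  nlinarith

lemma mono_aux (a b C K r d : ℝ) (ha : 0 < a) (hb : 0 < b) (hC : 0 ≤ C) (hK : 0 < K) :
    StrictMonoOn (fun z => C * (Real.exp (a*(d-z)) + a/b * Real.exp (-b*(d-z))) - 1/r + K * Real.exp (-b*(d-z))) (Set.Ici d) := by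
  apply strictMonoOn_of_deriv_pos (convex_Ici d)
  · fun_prop
  · intro z hz
    rw [interior_Ici, Set.mem_Ioi] at hz
    have h1 : HasDerivAt (fun z : ℝ => Real.exp (a*(d-z))) (Real.exp (a*(d-z)) * (-a)) z := by
      have hlin : HasDerivAt (fun z : ℝ => a*(d-z)) (-a) z := by
        simpa using ((hasDerivAt_id z).const_sub d).const_mul a
      exact hlin.exp
    have h2 : HasDerivAt (fun z : ℝ => Real.exp (-b*(d-z))) (Real.exp (-b*(d-z)) * b) z := by
      have hlin : HasDerivAt (fun z : ℝ => -b*(d-z)) b z := by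
        simpa using ((hasDerivAt_id z).const_sub d).const_mul (-b)
      exact hlin.exp
    have hD : HasDerivAt (fun z => C * (Real.exp (a*(d-z)) + a/b * Real.exp (-b*(d-z))) - 1/r + K * Real.exp (-b*(d-z)))
        (C * (Real.exp (a*(d-z)) * (-a) + a/b * (Real.exp (-b*(d-z)) * b)) + K * (Real.exp (-b*(d-z)) * b)) z :=
      (((h1.add (h2.const_mul (a/b))).const_mul C).sub_const (1/r)).add (h2.const_mul K)
    rw [hD.deriv]
    have he1 : Real.exp (a*(d-z)) < 1 := by
      rw [Real.exp_lt_one_iff]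
      nlinarith
    have he2 : (1:ℝ) ≤ Real.exp (-b*(d-z)) := Real.one_le_exp (by nlinarith)
    have hbne : a/b * (Real.exp (-b*(d-z)) * b) = a * Real.exp (-b*(d-z)) := by
      field_simp
    rw [hbne]
    nlinarith [mul_pos (mul_pos hK (Real.exp_pos (-b*(d-z)))) hb,
      mul_nonneg hC (mul_nonneg ha.le (sub_nonneg.2 (he1.le.trans he2)))]

theorem stmt18 (μ σ r u₀ β d : ℝ) (hσ : 0 < σ) (hr : 0 < r) (hu₀ : 0 < u₀) (hβ : 0 < β)
    (hd : 0 < d) :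
    StrictMonoOn (rhsC μ σ r u₀ β d) (Set.Ici d) ∧
    rhsC μ σ r u₀ β d d = xi2 μ σ r u₀ β := by
  have ha : 0 < th1 μ σ r 0 := th1_pos μ σ r 0 hσ hr
  have hb : 0 < th2 μ σ r 0 := th2_pos μ σ r 0 hσ hr
  have hbu : 0 < th2 μ σ r u₀ := th2_pos μ σ r u₀ hσ hr
  have hblt : th2 μ σ r 0 < th2 μ σ r u₀ := th2_mono μ σ r u₀ hσ hr hu₀
  have hab : th1 μ σ r 0 * th2 μ σ r 0 * σ^2 = 2*r := th_prod μ σ r 0 hσ hr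
  have hrb : σ^2 * (th2 μ σ r 0)^2 / 2 + (μ - 0) * th2 μ σ r 0 = r := th2_quad μ σ r 0 hσ hr
  have hrbu : σ^2 * (th2 μ σ r u₀)^2 / 2 + (μ - u₀) * th2 μ σ r u₀ = r := th2_quad μ σ r u₀ hσ hr
  set a := th1 μ σ r 0 with hadef
  set b := th2 μ σ r 0 with hbdef
  set bu := th2 μ σ r u₀ with hbudef
  constructor
  · have heq : rhsC μ σ r u₀ β d = fun z =>
        β * ((bu - b) / (a * (a + b))) * (Real.exp (a*(d-z)) + a/b * Real.exp (-b*(d-z)))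
          - 1/r + β/b * Real.exp (-b*(d-z)) := by
      funext z
      rw [hadef, hbdef, hbudef]
      rfl
    rw [heq]
    exact mono_aux a b _ _ r d ha hb
      (mul_nonneg hβ.le (div_nonneg (sub_nonneg.2 hblt.le) (by positivity))) (by positivity)
  · have hrd : rhsC μ σ r u₀ β d d =
        β * ((bu - b) / (a * (a + b))) * (1 + a / b) - 1/r + β / b := by
      rw [hadef, hbdef, hbudef]
      simp only [rhsC, sub_self, mul_zero, Real.exp_zero, mul_one]
    have hbX : b * (σ^2*b/2 + μ) = r := by linear_combination hrb
    have hbuX : bu * (σ^2*bu/2 + (μ - u₀)) = r := by linear_combination hrbu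
    have h1 : (bu - b) / (a * (a + b)) * (1 + a / b) = (bu - b) * σ^2 / (2*r) := by
      rw [eq_div_iff (by positivity), ← hab]
      field_simp
      ring
    have hfb : β / b = β * (σ^2*b/2 + μ) / r := by
      rw [eq_div_iff hr.ne', ← hbX]
      field_simp
    have hfbu : β / bu = β * (σ^2*bu/2 + (μ - u₀)) / r := by
      rw [eq_div_iff hr.ne', ← hbuX]
      field_simp
    rw [hrd, xi2, ← hbudef, mul_assoc β, h1, hfb, hfbu]
    field_simp
    ring
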